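/- Let u have continuous partial derivatives up to order 2 on T. Then for every τ ∈ Q_k(T): (Q₀u, Δτ)_T − ⟨Q_b u, ∇τ·𝐧⟩_{∂T} + ⟨𝐐_g(∇u)·𝐧, τ⟩_{∂T} = (Q₀(Δu), τ)_T. (Equivalently, the discrete weak Laplacian of the projected triple (Q₀u, Q_b u, 𝐐_g(∇u)) equals Q₀(Δu).) -/

import Mathlib

open MeasureTheory Real

noncomputable section

/-- `Q_k`: real polynomials in two variables of degree at most `k` in each variable. -/
def IsQk (k : ℕ) (v : ℝ → ℝ → ℝ) : Prop :=
  ∃ p : MvPolynomial (Fin 2) ℝ, (∀ i, p.degreeOf i ≤ k) ∧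
    ∀ x y : ℝ, v x y = MvPolynomial.eval ![x, y] p

/-- `P_k`: real polynomials in one variable of degree at most `k`. -/
def IsPk (k : ℕ) (f : ℝ → ℝ) : Prop :=
  ∃ p : Polynomial ℝ, p.natDegree ≤ k ∧ ∀ x : ℝ, f x = p.eval x

/-- Partial derivative in the first variable. -/
def pd1 (w : ℝ → ℝ → ℝ) : ℝ → ℝ → ℝ := fun x y => deriv (fun t => w t y) x

/-- Partial derivative in the second variable. -/
def pd2 (w : ℝ → ℝ → ℝ) : ℝ → ℝ → ℝ := fun x y => deriv (fun t => w x t) y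

/-- Laplacian. -/
def lapl (w : ℝ → ℝ → ℝ) : ℝ → ℝ → ℝ :=
  fun x y => pd1 (pd1 w) x y + pd2 (pd2 w) x y

/-- L² inner product over the rectangle `[x0,x1] × [y0,y1]`. -/
def ipT (x0 x1 y0 y1 : ℝ) (f g : ℝ → ℝ → ℝ) : ℝ :=
  ∫ x in x0..x1, ∫ y in y0..y1, f x y * g x y

/-- Squared L² norm over the rectangle `[x0,x1] × [y0,y1]`. -/
def normSqT (x0 x1 y0 y1 : ℝ) (w : ℝ → ℝ → ℝ) : ℝ := ipT x0 x1 y0 y1 w w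

/-- Squared L² norm over the two edges parallel to the x-axis (`∂T₁`). -/
def normSqE1 (x0 x1 y0 y1 : ℝ) (w : ℝ → ℝ → ℝ) : ℝ :=
  ∫ x in x0..x1, ((w x y0) ^ 2 + (w x y1) ^ 2)

/-- Squared L² norm over the two edges parallel to the y-axis (`∂T₂`). -/
def normSqE2 (x0 x1 y0 y1 : ℝ) (w : ℝ → ℝ → ℝ) : ℝ :=
  ∫ y in y0..y1, ((w x0 y) ^ 2 + (w x1 y) ^ 2)

/-- `P` is the L²(T)-orthogonal projection of `φ` onto `Q_k(T)`. -/
def IsProjT (k : ℕ) (x0 x1 y0 y1 : ℝ) (φ P : ℝ → ℝ → ℝ) : Prop :=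
  IsQk k P ∧ ∀ q : ℝ → ℝ → ℝ, IsQk k q →
    ipT x0 x1 y0 y1 (fun x y => φ x y - P x y) q = 0

/-- `g` is the L²(e)-orthogonal projection of `f` onto `P_k(e)`, for an edge
parametrized by `[a,b]`. -/
def IsProjE (k : ℕ) (a b : ℝ) (f g : ℝ → ℝ) : Prop :=
  IsPk k g ∧ ∀ q : ℝ → ℝ, IsPk k q → (∫ x in a..b, (f x - g x) * q x) = 0

/-! ### Auxiliary machinery -/

def fs (i j : ℕ) : Fin 2 →₀ ℕ := Finsupp.single 0 i + Finsupp.single 1 j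

lemma fs_apply0 (i j : ℕ) : fs i j 0 = i := by simp [fs, Finsupp.single_apply]

lemma fs_apply1 (i j : ℕ) : fs i j 1 = j := by simp [fs, Finsupp.single_apply]

lemma fs_eq (d : Fin 2 →₀ ℕ) : fs (d 0) (d 1) = d := by
  ext l
  fin_cases l
  · simpa using fs_apply0 (d 0) (d 1)
  · simpa using fs_apply1 (d 0) (d 1)

lemma finsupp_prod_fs (i j : ℕ) (g : Fin 2 → ℝ) :
    (fs i j).prod (fun n e => g n ^ e) = g 0 ^ i * g 1 ^ j := by
  rw [fs, Finsupp.prod_add_index' (fun a => pow_zero (g a)) (fun a b c => pow_add (g a) b c)]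
  simp [Finsupp.prod_single_index]

/-- coefficient-list representation of `Q_k` -/
def QRep (k : ℕ) (v : ℝ → ℝ → ℝ) : Prop :=
  ∃ a : ℕ → Polynomial ℝ, (∀ j, (a j).natDegree ≤ k) ∧ (∀ j, k < j → a j = 0) ∧
    ∀ x y, v x y = ∑ j ∈ Finset.range (k+1), (a j).eval x * y ^ j

lemma isQk_qrep {k : ℕ} {v : ℝ → ℝ → ℝ} (h : IsQk k v) : QRep k v := by
  obtain ⟨p, hdeg, hv⟩ := h
  classical
  refine ⟨fun j => if j ≤ k then ∑ i ∈ Finset.range (k+1),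
      Polynomial.C (p.coeff (fs i j)) * Polynomial.X ^ i else 0, ?_, ?_, ?_⟩
  · intro j
    dsimp only
    split
    · apply (Polynomial.natDegree_sum_le _ _).trans
      rw [Finset.fold_max_le]
      refine ⟨Nat.zero_le _, fun i hi => ?_⟩
      exact (Polynomial.natDegree_C_mul_le _ _).trans
        (by simpa using Nat.lt_succ_iff.mp (Finset.mem_range.mp hi))
    · simp
  · intro j hj; simp [Nat.not_le.mpr hj]
  · intro x y
    rw [hv]
    have h1 : ∀ j ∈ Finset.range (k+1),
        (if j ≤ k then ∑ i ∈ Finset.range (k+1),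
          Polynomial.C (p.coeff (fs i j)) * Polynomial.X ^ i else 0).eval x * y ^ j
        = ∑ i ∈ Finset.range (k+1), p.coeff (fs i j) * x ^ i * y ^ j := by
      intro j hj
      rw [if_pos (Nat.lt_succ_iff.mp (Finset.mem_range.mp hj))]
      rw [Polynomial.eval_finset_sum, Finset.sum_mul]
      simp
    rw [Finset.sum_congr rfl h1]
    rw [MvPolynomial.eval_eq']
    have e_inj : Set.InjOn (fun m : ℕ × ℕ => fs m.2 m.1)
        ((Finset.range (k+1)) ×ˢ (Finset.range (k+1)) : Finset (ℕ×ℕ)) := by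
      intro m _ m' _ hmm
      dsimp only at hmm
      have h0 : fs m.2 m.1 0 = fs m'.2 m'.1 0 := by rw [hmm]
      have h1' : fs m.2 m.1 1 = fs m'.2 m'.1 1 := by rw [hmm]
      simp only [fs_apply0, fs_apply1] at h0 h1'
      exact Prod.ext h1' h0
    have hsub : p.support ⊆ ((Finset.range (k+1)) ×ˢ (Finset.range (k+1))).image
        (fun m : ℕ×ℕ => fs m.2 m.1) := by
      intro d hd
      refine Finset.mem_image.mpr ⟨(d 1, d 0), ?_, fs_eq d⟩
      refine Finset.mem_product.mpr ⟨?_, ?_⟩ <;>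
        exact Finset.mem_range.mpr (Nat.lt_succ_iff.mpr
          ((MvPolynomial.monomial_le_degreeOf _ hd).trans (hdeg _)))
    set g : (Fin 2 →₀ ℕ) → ℝ := fun d => p.coeff d * (x ^ d 0 * y ^ d 1) with hg
    have key : ∑ d ∈ p.support, p.coeff d * ∏ i, (![x,y] : Fin 2 → ℝ) i ^ d i
        = ∑ m ∈ ((Finset.range (k+1)) ×ˢ (Finset.range (k+1)) : Finset (ℕ×ℕ)),
            p.coeff (fs m.2 m.1) * x ^ m.2 * y ^ m.1 := by
      have s1 : ∑ d ∈ p.support, p.coeff d * ∏ i, (![x,y] : Fin 2 → ℝ) i ^ d i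
          = ∑ d ∈ p.support, g d := by
        apply Finset.sum_congr rfl
        intro d _
        rw [Fin.prod_univ_two, hg]
        simp
      have s2 : ∑ d ∈ p.support, g d
          = ∑ d ∈ ((Finset.range (k+1)) ×ˢ (Finset.range (k+1))).image
              (fun m : ℕ×ℕ => fs m.2 m.1), g d := by
        apply Finset.sum_subset hsub
        intro d _ hd
        rw [hg]
        simp [MvPolynomial.notMem_support_iff.mp hd]
      have s3 : ∑ d ∈ ((Finset.range (k+1)) ×ˢ (Finset.range (k+1))).image
              (fun m : ℕ×ℕ => fs m.2 m.1), g d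
          = ∑ m ∈ ((Finset.range (k+1)) ×ˢ (Finset.range (k+1)) : Finset (ℕ×ℕ)),
              g (fs m.2 m.1) := by
        apply Finset.sum_image
        intro m hm m' hm' h
        exact e_inj (by simpa using hm) (by simpa using hm') h
      rw [s1, s2, s3]
      apply Finset.sum_congr rfl
      intro m _
      rw [hg]
      simp [fs_apply0, fs_apply1, mul_assoc]
    rw [key, Finset.sum_product]

lemma qrep_isQk {k : ℕ} {v : ℝ → ℝ → ℝ} (h : QRep k v) : IsQk k v := by
  classical
  obtain ⟨a, hdeg, _, hv⟩ := h
  refine ⟨∑ j ∈ Finset.range (k+1), ∑ i ∈ Finset.range (k+1),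
    MvPolynomial.monomial (fs i j) ((a j).coeff i), ?_, ?_⟩
  · intro l
    apply (MvPolynomial.degreeOf_sum_le _ _ _).trans
    rw [Finset.sup_le_iff]
    intro j hj
    apply (MvPolynomial.degreeOf_sum_le _ _ _).trans
    rw [Finset.sup_le_iff]
    intro i hi
    rw [MvPolynomial.degreeOf_le_iff]
    intro m hm
    rw [MvPolynomial.support_monomial] at hm
    by_cases hc : (a j).coeff i = 0
    · simp [hc] at hm
    · rw [if_neg hc, Finset.mem_singleton] at hm
      subst hm
      fin_cases l
      · simpa [fs_apply0] using Nat.lt_succ_iff.mp (Finset.mem_range.mp hi)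
      · simpa [fs_apply1] using Nat.lt_succ_iff.mp (Finset.mem_range.mp hj)
  · intro x y
    rw [hv x y, map_sum]
    apply Finset.sum_congr rfl
    intro j _
    rw [map_sum]
    have : ∀ i ∈ Finset.range (k+1),
        MvPolynomial.eval ![x,y] (MvPolynomial.monomial (fs i j) ((a j).coeff i))
        = (a j).coeff i * (x ^ i * y ^ j) := by
      intro i _
      rw [MvPolynomial.eval_monomial, finsupp_prod_fs]
      simp
    rw [Finset.sum_congr rfl this]
    rw [Polynomial.eval_eq_sum_range' (Nat.lt_succ_of_le (hdeg j)), Finset.sum_mul]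
    apply Finset.sum_congr rfl
    intro i _
    ring

lemma qrep_pd1 {k : ℕ} {v : ℝ → ℝ → ℝ} (h : QRep k v) : QRep k (pd1 v) := by
  obtain ⟨a, hdeg, hhi, hv⟩ := h
  refine ⟨fun j => (a j).derivative, fun j => (Polynomial.natDegree_derivative_le _).trans
    ((Nat.sub_le _ _).trans (hdeg j)), fun j hj => by dsimp only; rw [hhi j hj]; simp, ?_⟩
  intro x y
  have hfun : (fun t => v t y) = fun t => ∑ j ∈ Finset.range (k+1), (a j).eval t * y ^ j :=
    funext fun t => hv t y
  have hd : HasDerivAt (fun t => ∑ j ∈ Finset.range (k+1), (a j).eval t * y ^ j)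
      (∑ j ∈ Finset.range (k+1), (a j).derivative.eval x * y ^ j) x :=
    HasDerivAt.fun_sum fun j _ => ((a j).hasDerivAt x).mul_const _
  rw [pd1, hfun]
  exact hd.deriv

lemma qrep_pd2 {k : ℕ} {v : ℝ → ℝ → ℝ} (h : QRep k v) : QRep k (pd2 v) := by
  obtain ⟨a, hdeg, hhi, hv⟩ := h
  refine ⟨fun j => Polynomial.C ((j : ℝ) + 1) * a (j+1),
    fun j => (Polynomial.natDegree_C_mul_le _ _).trans (hdeg (j+1)),
    fun j hj => by dsimp only; rw [hhi (j+1) (Nat.lt_succ_of_lt hj)]; simp, ?_⟩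
  intro x y
  have hfun : (fun t => v x t) = fun t => ∑ j ∈ Finset.range (k+1), (a j).eval x * t ^ j :=
    funext fun t => hv x t
  have hd : HasDerivAt (fun t => ∑ j ∈ Finset.range (k+1), (a j).eval x * t ^ j)
      (∑ j ∈ Finset.range (k+1), (a j).eval x * ((j : ℝ) * y ^ (j-1))) y :=
    HasDerivAt.fun_sum fun j _ => (hasDerivAt_pow j y).const_mul _
  have hval : pd2 v x y = ∑ j ∈ Finset.range (k+1), (a j).eval x * ((j : ℝ) * y ^ (j-1)) := by
    rw [pd2, hfun]; exact hd.deriv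
  rw [hval]
  rw [Finset.sum_range_succ' (fun j => (a j).eval x * ((j:ℝ) * y ^ (j-1))) k]
  rw [Finset.sum_range_succ (fun j => (Polynomial.C ((j:ℝ)+1) * a (j+1)).eval x * y ^ j) k]
  rw [hhi (k+1) (Nat.lt_succ_self k)]
  simp only [Nat.cast_zero, zero_mul, mul_zero, pow_zero, Nat.cast_add, Nat.cast_one,
    Polynomial.eval_mul, Polynomial.eval_C, Polynomial.eval_zero, add_zero, Nat.add_sub_cancel]
  apply Finset.sum_congr rfl
  intro j _
  ring

lemma qrep_sect_x {k : ℕ} {v : ℝ → ℝ → ℝ} (h : QRep k v) (y : ℝ) :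
    IsPk k (fun x => v x y) := by
  obtain ⟨a, hdeg, _, hv⟩ := h
  refine ⟨∑ j ∈ Finset.range (k+1), a j * Polynomial.C (y ^ j), ?_, ?_⟩
  · apply (Polynomial.natDegree_sum_le _ _).trans
    rw [Finset.fold_max_le]
    refine ⟨Nat.zero_le _, fun j _ => ?_⟩
    exact (Polynomial.natDegree_mul_le).trans (by simpa using hdeg j)
  · intro x
    dsimp only
    rw [hv, Polynomial.eval_finset_sum]
    simp

lemma qrep_sect_y {k : ℕ} {v : ℝ → ℝ → ℝ} (h : QRep k v) (x : ℝ) :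
    IsPk k (fun y => v x y) := by
  obtain ⟨a, hdeg, _, hv⟩ := h
  refine ⟨∑ j ∈ Finset.range (k+1), Polynomial.C ((a j).eval x) * Polynomial.X ^ j, ?_, ?_⟩
  · apply (Polynomial.natDegree_sum_le _ _).trans
    rw [Finset.fold_max_le]
    refine ⟨Nat.zero_le _, fun j hj => ?_⟩
    exact (Polynomial.natDegree_C_mul_le _ _).trans
      (by simpa using Nat.lt_succ_iff.mp (Finset.mem_range.mp hj))
  · intro y
    dsimp only
    rw [hv, Polynomial.eval_finset_sum]
    simp

lemma qrep_cont {k : ℕ} {v : ℝ → ℝ → ℝ} (h : QRep k v) :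
    Continuous (fun p : ℝ × ℝ => v p.1 p.2) := by
  obtain ⟨a, _, _, hv⟩ := h
  have hfun : (fun p : ℝ × ℝ => v p.1 p.2)
      = fun p : ℝ × ℝ => ∑ j ∈ Finset.range (k+1), (a j).eval p.1 * p.2 ^ j :=
    funext fun p => hv p.1 p.2
  rw [hfun]
  exact continuous_finset_sum _ fun j _ =>
    ((a j).continuous_aeval.comp continuous_fst).mul ((continuous_pow j).comp continuous_snd)

lemma contDiff_polyeval (n : WithTop ℕ∞) (p : Polynomial ℝ) :
    ContDiff ℝ n fun x => p.eval x := by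
  induction p using Polynomial.induction_on' with
  | add p q hp hq => simpa [Polynomial.eval_add] using hp.add hq
  | monomial m a => simpa [Polynomial.eval_monomial] using
      (contDiff_const (c := a)).mul (contDiff_id.pow m)

lemma isPk_cont {k : ℕ} {f : ℝ → ℝ} (h : IsPk k f) : Continuous f := by
  obtain ⟨p, _, hp⟩ := h
  have : f = fun x => p.eval x := funext hp
  rw [this]
  exact (contDiff_polyeval 1 p).continuous

lemma isPk_contDiff {k : ℕ} {f : ℝ → ℝ} (h : IsPk k f) (n : WithTop ℕ∞) : ContDiff ℝ n f := by
  obtain ⟨p, _, hp⟩ := h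
  have : f = fun x => p.eval x := funext hp
  rw [this]
  exact contDiff_polyeval n p

lemma deriv2_of_contDiff {f : ℝ → ℝ} (hf : ContDiff ℝ 2 f) : ContDiff ℝ 1 (deriv f) := by
  have h2 : ContDiff ℝ ((1:ℕ) + 1 : ℕ) f := by exact_mod_cast hf
  exact (contDiff_succ_iff_deriv.mp (by exact_mod_cast h2)).2.2

lemma green1d (f g : ℝ → ℝ) (hf : ContDiff ℝ 2 f) (hg : ContDiff ℝ 2 g) (a b : ℝ) :
    ∫ x in a..b, (f x * deriv (deriv g) x - deriv (deriv f) x * g x)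
      = (f b * deriv g b - deriv f b * g b) - (f a * deriv g a - deriv f a * g a) := by
  have hdf := deriv2_of_contDiff hf
  have hdg := deriv2_of_contDiff hg
  have hddf : Continuous (deriv (deriv f)) := (contDiff_one_iff_deriv.mp hdf).2
  have hddg : Continuous (deriv (deriv g)) := (contDiff_one_iff_deriv.mp hdg).2
  apply intervalIntegral.integral_eq_sub_of_hasDerivAt
  · intro x _
    have H1 : HasDerivAt f (deriv f x) x :=
      ((hf.differentiable (by norm_num)) x).hasDerivAt
    have H1g : HasDerivAt g (deriv g x) x :=
      ((hg.differentiable (by norm_num)) x).hasDerivAt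
    have H2 : HasDerivAt (deriv f) (deriv (deriv f) x) x :=
      ((hdf.differentiable one_ne_zero) x).hasDerivAt
    have H2g : HasDerivAt (deriv g) (deriv (deriv g) x) x :=
      ((hdg.differentiable one_ne_zero) x).hasDerivAt
    have := (H1.fun_mul H2g).fun_sub (H2.fun_mul H1g)
    convert this using 1
    ring
  · exact ((hf.continuous.mul hddg).sub (hddf.mul hg.continuous)).intervalIntegrable _ _

lemma swap_int (F : ℝ → ℝ → ℝ) (hF : Continuous (fun p : ℝ × ℝ => F p.1 p.2))
    {x0 x1 y0 y1 : ℝ} (hx : x0 ≤ x1) (hy : y0 ≤ y1) :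
    ∫ x in x0..x1, ∫ y in y0..y1, F x y = ∫ y in y0..y1, ∫ x in x0..x1, F x y := by
  have h1 : IntegrableOn (fun p : ℝ × ℝ => F p.1 p.2)
      (Set.Icc x0 x1 ×ˢ Set.Icc y0 y1) (volume.prod volume) := by
    rw [← Measure.volume_eq_prod]
    exact hF.continuousOn.integrableOn_compact (isCompact_Icc.prod isCompact_Icc)
  have h2 : Integrable (Function.uncurry F)
      ((volume.restrict (Set.Ioc x0 x1)).prod (volume.restrict (Set.Ioc y0 y1))) := by
    rw [Measure.prod_restrict]
    exact h1.mono_set (Set.prod_mono Set.Ioc_subset_Icc_self Set.Ioc_subset_Icc_self)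
  have e1 : ∀ x, ∫ y in y0..y1, F x y = ∫ y in Set.Ioc y0 y1, F x y := fun x =>
    intervalIntegral.integral_of_le hy
  have e2 : ∀ y, ∫ x in x0..x1, F x y = ∫ x in Set.Ioc x0 x1, F x y := fun y =>
    intervalIntegral.integral_of_le hx
  rw [intervalIntegral.integral_of_le hx, intervalIntegral.integral_of_le hy]
  simp_rw [e1, e2]
  exact MeasureTheory.integral_integral_swap h2

lemma pd1_eq {w : ℝ → ℝ → ℝ} (hw : ContDiff ℝ 1 (fun p : ℝ × ℝ => w p.1 p.2)) :
    pd1 w = fun x y => (fderiv ℝ (fun p : ℝ × ℝ => w p.1 p.2) (x, y)) (1, 0) := by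
  funext x y
  have hF : HasFDerivAt (fun p : ℝ × ℝ => w p.1 p.2)
      (fderiv ℝ (fun p : ℝ × ℝ => w p.1 p.2) (x, y)) (x, y) :=
    ((hw.differentiable one_ne_zero) (x, y)).hasFDerivAt
  have hL : HasDerivAt (fun t : ℝ => (t, y)) ((1 : ℝ), (0 : ℝ)) x :=
    (hasDerivAt_id x).prodMk (hasDerivAt_const x y)
  exact (hF.comp_hasDerivAt x hL).deriv

lemma pd2_eq {w : ℝ → ℝ → ℝ} (hw : ContDiff ℝ 1 (fun p : ℝ × ℝ => w p.1 p.2)) :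
    pd2 w = fun x y => (fderiv ℝ (fun p : ℝ × ℝ => w p.1 p.2) (x, y)) (0, 1) := by
  funext x y
  have hF : HasFDerivAt (fun p : ℝ × ℝ => w p.1 p.2)
      (fderiv ℝ (fun p : ℝ × ℝ => w p.1 p.2) (x, y)) (x, y) :=
    ((hw.differentiable one_ne_zero) (x, y)).hasFDerivAt
  have hL : HasDerivAt (fun t : ℝ => (x, t)) ((0 : ℝ), (1 : ℝ)) y :=
    (hasDerivAt_const y x).prodMk (hasDerivAt_id y)
  exact (hF.comp_hasDerivAt y hL).deriv

lemma contDiff_pd1 {w : ℝ → ℝ → ℝ} {n : ℕ}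
    (hw : ContDiff ℝ (n+1 : ℕ) (fun p : ℝ × ℝ => w p.1 p.2)) :
    ContDiff ℝ n (fun p : ℝ × ℝ => pd1 w p.1 p.2) := by
  have h1 : ContDiff ℝ 1 (fun p : ℝ × ℝ => w p.1 p.2) :=
    hw.of_le (by exact_mod_cast Nat.one_le_cast.mpr (Nat.succ_le_succ (Nat.zero_le n)))
  have heq := pd1_eq h1
  simp only [pd1] at heq ⊢
  rw [show (fun p : ℝ × ℝ => deriv (fun t => w t p.2) p.1)
      = fun p : ℝ × ℝ => (fderiv ℝ (fun p : ℝ × ℝ => w p.1 p.2) p) (1, 0) from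
    funext fun p => congrFun (congrFun heq p.1) p.2]
  have hfd : ContDiff ℝ n (fderiv ℝ (fun p : ℝ × ℝ => w p.1 p.2)) :=
    hw.fderiv_right (by exact_mod_cast le_rfl)
  exact hfd.clm_apply contDiff_const

lemma contDiff_pd2 {w : ℝ → ℝ → ℝ} {n : ℕ}
    (hw : ContDiff ℝ (n+1 : ℕ) (fun p : ℝ × ℝ => w p.1 p.2)) :
    ContDiff ℝ n (fun p : ℝ × ℝ => pd2 w p.1 p.2) := by
  have h1 : ContDiff ℝ 1 (fun p : ℝ × ℝ => w p.1 p.2) :=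
    hw.of_le (by exact_mod_cast Nat.one_le_cast.mpr (Nat.succ_le_succ (Nat.zero_le n)))
  have heq := pd2_eq h1
  simp only [pd2] at heq ⊢
  rw [show (fun p : ℝ × ℝ => deriv (fun t => w p.1 t) p.2)
      = fun p : ℝ × ℝ => (fderiv ℝ (fun p : ℝ × ℝ => w p.1 p.2) p) (0, 1) from
    funext fun p => congrFun (congrFun heq p.1) p.2]
  have hfd : ContDiff ℝ n (fderiv ℝ (fun p : ℝ × ℝ => w p.1 p.2)) :=
    hw.fderiv_right (by exact_mod_cast le_rfl)
  exact hfd.clm_apply contDiff_const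

lemma sect_cont_x {F : ℝ → ℝ → ℝ} (h : Continuous fun p : ℝ × ℝ => F p.1 p.2) (y : ℝ) :
    Continuous fun x => F x y := h.comp (continuous_id.prodMk continuous_const)

lemma sect_cont_y {F : ℝ → ℝ → ℝ} (h : Continuous fun p : ℝ × ℝ => F p.1 p.2) (x : ℝ) :
    Continuous fun y => F x y := h.comp (continuous_const.prodMk continuous_id)

lemma param_cont {F : ℝ → ℝ → ℝ} (h : Continuous fun p : ℝ × ℝ => F p.1 p.2) (c d : ℝ) :
    Continuous fun x => ∫ y in c..d, F x y :=
  intervalIntegral.continuous_parametric_intervalIntegral_of_continuous' h c d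

lemma param_cont_swap {F : ℝ → ℝ → ℝ} (h : Continuous fun p : ℝ × ℝ => F p.1 p.2) (a b : ℝ) :
    Continuous fun y => ∫ x in a..b, F x y := by
  have h' : Continuous fun p : ℝ × ℝ => F p.2 p.1 := by
    exact h.comp continuous_swap
  exact param_cont (F := fun y x => F x y) h' a b

lemma intInt_sub {F G : ℝ → ℝ → ℝ} (hF : Continuous fun p : ℝ × ℝ => F p.1 p.2)
    (hG : Continuous fun p : ℝ × ℝ => G p.1 p.2) (x0 x1 y0 y1 : ℝ) :
    ∫ x in x0..x1, ∫ y in y0..y1, (F x y - G x y)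
      = (∫ x in x0..x1, ∫ y in y0..y1, F x y) - ∫ x in x0..x1, ∫ y in y0..y1, G x y := by
  have e : ∀ x, (∫ y in y0..y1, (F x y - G x y))
      = (∫ y in y0..y1, F x y) - ∫ y in y0..y1, G x y := fun x =>
    intervalIntegral.integral_sub ((sect_cont_y hF x).intervalIntegrable _ _)
      ((sect_cont_y hG x).intervalIntegrable _ _)
  simp only [e]
  exact intervalIntegral.integral_sub ((param_cont hF _ _).intervalIntegrable _ _)
    ((param_cont hG _ _).intervalIntegrable _ _)

lemma intInt_add {F G : ℝ → ℝ → ℝ} (hF : Continuous fun p : ℝ × ℝ => F p.1 p.2)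
    (hG : Continuous fun p : ℝ × ℝ => G p.1 p.2) (x0 x1 y0 y1 : ℝ) :
    ∫ x in x0..x1, ∫ y in y0..y1, (F x y + G x y)
      = (∫ x in x0..x1, ∫ y in y0..y1, F x y) + ∫ x in x0..x1, ∫ y in y0..y1, G x y := by
  have e : ∀ x, (∫ y in y0..y1, (F x y + G x y))
      = (∫ y in y0..y1, F x y) + ∫ y in y0..y1, G x y := fun x =>
    intervalIntegral.integral_add ((sect_cont_y hF x).intervalIntegrable _ _)
      ((sect_cont_y hG x).intervalIntegrable _ _)
  simp only [e]
  exact intervalIntegral.integral_add ((param_cont hF _ _).intervalIntegrable _ _)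
    ((param_cont hG _ _).intervalIntegrable _ _)

lemma ipT_proj {k : ℕ} {x0 x1 y0 y1 : ℝ} {φ P : ℝ → ℝ → ℝ}
    (hP : IsProjT k x0 x1 y0 y1 φ P) (hφ : Continuous fun p : ℝ × ℝ => φ p.1 p.2)
    {q : ℝ → ℝ → ℝ} (hq : IsQk k q) :
    ipT x0 x1 y0 y1 P q = ipT x0 x1 y0 y1 φ q := by
  have h0 := hP.2 q hq
  have hPc := qrep_cont (isQk_qrep hP.1)
  have hqc := qrep_cont (isQk_qrep hq)
  have hsplit : ipT x0 x1 y0 y1 (fun x y => φ x y - P x y) q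
      = ipT x0 x1 y0 y1 φ q - ipT x0 x1 y0 y1 P q := by
    simp only [ipT, sub_mul]
    exact intInt_sub (hφ.mul hqc) (hPc.mul hqc) _ _ _ _
  rw [hsplit] at h0
  linarith

lemma edge_proj {k : ℕ} {a b : ℝ} {f g : ℝ → ℝ} (h : IsProjE k a b f g) (hf : Continuous f)
    {q : ℝ → ℝ} (hq : IsPk k q) : ∫ x in a..b, g x * q x = ∫ x in a..b, f x * q x := by
  have h0 := h.2 q hq
  have hgc := isPk_cont h.1
  have hqc := isPk_cont hq
  have hsplit : (∫ x in a..b, (f x - g x) * q x)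
      = (∫ x in a..b, f x * q x) - ∫ x in a..b, g x * q x := by
    simp only [sub_mul]
    exact intervalIntegral.integral_sub ((hf.mul hqc).intervalIntegrable _ _)
      ((hgc.mul hqc).intervalIntegrable _ _)
  rw [hsplit] at h0
  linarith

lemma green_sec_x (f g : ℝ → ℝ → ℝ) (y : ℝ) (hf : ContDiff ℝ 2 fun x => f x y)
    (hg : ContDiff ℝ 2 fun x => g x y) (a b : ℝ) :
    ∫ x in a..b, (f x y * pd1 (pd1 g) x y - pd1 (pd1 f) x y * g x y)
      = (f b y * pd1 g b y - pd1 f b y * g b y)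
        - (f a y * pd1 g a y - pd1 f a y * g a y) := by
  have h := green1d (fun x => f x y) (fun x => g x y) hf hg a b
  simpa [pd1] using h

lemma green_sec_y (f g : ℝ → ℝ → ℝ) (x : ℝ) (hf : ContDiff ℝ 2 fun y => f x y)
    (hg : ContDiff ℝ 2 fun y => g x y) (a b : ℝ) :
    ∫ y in a..b, (f x y * pd2 (pd2 g) x y - pd2 (pd2 f) x y * g x y)
      = (f x b * pd2 g x b - pd2 f x b * g x b)
        - (f x a * pd2 g x a - pd2 f x a * g x a) := by
  have h := green1d (fun y => f x y) (fun y => g x y) hf hg a b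
  simpa [pd2] using h

theorem statement5 (k : ℕ) (hk : 3 ≤ k) (x0 x1 y0 y1 : ℝ) (hx : x0 < x1) (hy : y0 < y1)
    (u : ℝ → ℝ → ℝ) (hu : ContDiff ℝ 2 (fun p : ℝ × ℝ => u p.1 p.2))
    (P0u P0Lu : ℝ → ℝ → ℝ)
    (hP0u : IsProjT k x0 x1 y0 y1 u P0u)
    (hP0Lu : IsProjT k x0 x1 y0 y1 (lapl u) P0Lu)
    (qbB qbT qbL qbR g1B g2B g1T g2T g1L g2L g1R g2R : ℝ → ℝ)
    (hqbB : IsProjE k x0 x1 (fun x => u x y0) qbB)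
    (hqbT : IsProjE k x0 x1 (fun x => u x y1) qbT)
    (hqbL : IsProjE k y0 y1 (fun y => u x0 y) qbL)
    (hqbR : IsProjE k y0 y1 (fun y => u x1 y) qbR)
    (hg1B : IsProjE k x0 x1 (fun x => pd1 u x y0) g1B)
    (hg2B : IsProjE k x0 x1 (fun x => pd2 u x y0) g2B)
    (hg1T : IsProjE k x0 x1 (fun x => pd1 u x y1) g1T)
    (hg2T : IsProjE k x0 x1 (fun x => pd2 u x y1) g2T)
    (hg1L : IsProjE k y0 y1 (fun y => pd1 u x0 y) g1L)
    (hg2L : IsProjE k y0 y1 (fun y => pd2 u x0 y) g2L)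
    (hg1R : IsProjE k y0 y1 (fun y => pd1 u x1 y) g1R)
    (hg2R : IsProjE k y0 y1 (fun y => pd2 u x1 y) g2R)
    (τ : ℝ → ℝ → ℝ) (hτ : IsQk k τ) :
    ipT x0 x1 y0 y1 P0u (lapl τ)
      - ((∫ x in x0..x1, qbB x * (-(pd2 τ x y0)))
        + (∫ x in x0..x1, qbT x * pd2 τ x y1)
        + (∫ y in y0..y1, qbL y * (-(pd1 τ x0 y)))
        + (∫ y in y0..y1, qbR y * pd1 τ x1 y))
      + ((∫ x in x0..x1, (-(g2B x)) * τ x y0)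
        + (∫ x in x0..x1, g2T x * τ x y1)
        + (∫ y in y0..y1, (-(g1L y)) * τ x0 y)
        + (∫ y in y0..y1, g1R y * τ x1 y))
    = ipT x0 x1 y0 y1 P0Lu τ := by
  have hxle := hx.le
  have hyle := hy.le
  -- regularity of u and its derivatives
  have hu' : ContDiff ℝ ((1+1 : ℕ) : WithTop ℕ∞) (fun p : ℝ × ℝ => u p.1 p.2) := by
    exact_mod_cast hu
  have hcu : Continuous (fun p : ℝ × ℝ => u p.1 p.2) := hu.continuous
  have h1u : ContDiff ℝ (1 : ℕ) (fun p : ℝ × ℝ => pd1 u p.1 p.2) := contDiff_pd1 hu'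
  have h2u : ContDiff ℝ (1 : ℕ) (fun p : ℝ × ℝ => pd2 u p.1 p.2) := contDiff_pd2 hu'
  have h1u' : ContDiff ℝ ((0+1 : ℕ) : WithTop ℕ∞) (fun p : ℝ × ℝ => pd1 u p.1 p.2) := by
    exact_mod_cast h1u
  have h2u' : ContDiff ℝ ((0+1 : ℕ) : WithTop ℕ∞) (fun p : ℝ × ℝ => pd2 u p.1 p.2) := by
    exact_mod_cast h2u
  have hc1u : Continuous (fun p : ℝ × ℝ => pd1 u p.1 p.2) := h1u.continuous
  have hc2u : Continuous (fun p : ℝ × ℝ => pd2 u p.1 p.2) := h2u.continuous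
  have hc11 : Continuous (fun p : ℝ × ℝ => pd1 (pd1 u) p.1 p.2) :=
    (contDiff_pd1 h1u').continuous
  have hc22 : Continuous (fun p : ℝ × ℝ => pd2 (pd2 u) p.1 p.2) :=
    (contDiff_pd2 h2u').continuous
  -- structure of τ
  have hτrep : QRep k τ := isQk_qrep hτ
  have hp1τrep : QRep k (pd1 τ) := qrep_pd1 hτrep
  have hp2τrep : QRep k (pd2 τ) := qrep_pd2 hτrep
  have hτ1rep : QRep k (pd1 (pd1 τ)) := qrep_pd1 hp1τrep
  have hτ2rep : QRep k (pd2 (pd2 τ)) := qrep_pd2 hp2τrep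
  have hcτ : Continuous (fun p : ℝ × ℝ => τ p.1 p.2) := qrep_cont hτrep
  have hcp1τ : Continuous (fun p : ℝ × ℝ => pd1 τ p.1 p.2) := qrep_cont hp1τrep
  have hcp2τ : Continuous (fun p : ℝ × ℝ => pd2 τ p.1 p.2) := qrep_cont hp2τrep
  have hcτ1 : Continuous (fun p : ℝ × ℝ => pd1 (pd1 τ) p.1 p.2) := qrep_cont hτ1rep
  have hcτ2 : Continuous (fun p : ℝ × ℝ => pd2 (pd2 τ) p.1 p.2) := qrep_cont hτ2rep
  -- sections
  have hsecux : ∀ y, ContDiff ℝ 2 fun x => u x y := fun y =>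
    hu.comp (contDiff_id.prodMk contDiff_const)
  have hsecuy : ∀ x, ContDiff ℝ 2 fun y => u x y := fun x =>
    hu.comp (contDiff_const.prodMk contDiff_id)
  have hsecτx : ∀ y, ContDiff ℝ 2 fun x => τ x y := fun y =>
    isPk_contDiff (qrep_sect_x hτrep y) 2
  have hsecτy : ∀ x, ContDiff ℝ 2 fun y => τ x y := fun x =>
    isPk_contDiff (qrep_sect_y hτrep x) 2
  -- Step A : replace P0u by u
  have hA1 : ipT x0 x1 y0 y1 P0u (lapl τ)
      = ipT x0 x1 y0 y1 P0u (pd1 (pd1 τ)) + ipT x0 x1 y0 y1 P0u (pd2 (pd2 τ)) := by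
    have hPc : Continuous (fun p : ℝ × ℝ => P0u p.1 p.2) := qrep_cont (isQk_qrep hP0u.1)
    simp only [ipT, lapl, mul_add]
    exact intInt_add (hPc.mul hcτ1) (hPc.mul hcτ2) _ _ _ _
  have hA2 : ipT x0 x1 y0 y1 P0u (pd1 (pd1 τ)) = ipT x0 x1 y0 y1 u (pd1 (pd1 τ)) :=
    ipT_proj hP0u hcu (qrep_isQk hτ1rep)
  have hA3 : ipT x0 x1 y0 y1 P0u (pd2 (pd2 τ)) = ipT x0 x1 y0 y1 u (pd2 (pd2 τ)) :=
    ipT_proj hP0u hcu (qrep_isQk hτ2rep)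
  -- Step B : replace P0Lu by lapl u
  have hB1 : ipT x0 x1 y0 y1 P0Lu τ = ipT x0 x1 y0 y1 (lapl u) τ :=
    ipT_proj hP0Lu (by simpa [lapl] using hc11.fun_add hc22) hτ
  have hB2 : ipT x0 x1 y0 y1 (lapl u) τ
      = ipT x0 x1 y0 y1 (pd1 (pd1 u)) τ + ipT x0 x1 y0 y1 (pd2 (pd2 u)) τ := by
    simp only [ipT, lapl, add_mul]
    exact intInt_add (hc11.mul hcτ) (hc22.mul hcτ) _ _ _ _
  -- Green identity in x direction
  have hGx : ipT x0 x1 y0 y1 u (pd1 (pd1 τ)) - ipT x0 x1 y0 y1 (pd1 (pd1 u)) τ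
      = ((∫ y in y0..y1, u x1 y * pd1 τ x1 y) - (∫ y in y0..y1, pd1 u x1 y * τ x1 y))
        - ((∫ y in y0..y1, u x0 y * pd1 τ x0 y) - (∫ y in y0..y1, pd1 u x0 y * τ x0 y)) := by
    have hswap1 : ipT x0 x1 y0 y1 u (pd1 (pd1 τ))
        = ∫ y in y0..y1, ∫ x in x0..x1, u x y * pd1 (pd1 τ) x y := by
      exact swap_int (fun a b => u a b * pd1 (pd1 τ) a b) (hcu.mul hcτ1) hxle hyle
    have hswap2 : ipT x0 x1 y0 y1 (pd1 (pd1 u)) τ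
        = ∫ y in y0..y1, ∫ x in x0..x1, pd1 (pd1 u) x y * τ x y := by
      exact swap_int (fun a b => pd1 (pd1 u) a b * τ a b) (hc11.mul hcτ) hxle hyle
    have c1 : Continuous fun y => ∫ x in x0..x1, u x y * pd1 (pd1 τ) x y :=
      param_cont_swap (F := fun a b => u a b * pd1 (pd1 τ) a b) (hcu.mul hcτ1) x0 x1
    have c2 : Continuous fun y => ∫ x in x0..x1, pd1 (pd1 u) x y * τ x y :=
      param_cont_swap (F := fun a b => pd1 (pd1 u) a b * τ a b) (hc11.mul hcτ) x0 x1
    have key : ∀ y, ((∫ x in x0..x1, u x y * pd1 (pd1 τ) x y)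
        - ∫ x in x0..x1, pd1 (pd1 u) x y * τ x y)
        = (u x1 y * pd1 τ x1 y - pd1 u x1 y * τ x1 y)
          - (u x0 y * pd1 τ x0 y - pd1 u x0 y * τ x0 y) := by
      intro y
      rw [← intervalIntegral.integral_sub
        (((sect_cont_x hcu y).fun_mul (sect_cont_x hcτ1 y)).intervalIntegrable _ _)
        (((sect_cont_x hc11 y).fun_mul (sect_cont_x hcτ y)).intervalIntegrable _ _)]
      exact green_sec_x u τ y (hsecux y) (hsecτx y) x0 x1
    rw [hswap1, hswap2,
      ← intervalIntegral.integral_sub (c1.intervalIntegrable _ _) (c2.intervalIntegrable _ _),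
      intervalIntegral.integral_congr (g := fun y =>
        (u x1 y * pd1 τ x1 y - pd1 u x1 y * τ x1 y)
          - (u x0 y * pd1 τ x0 y - pd1 u x0 y * τ x0 y)) (fun y _ => key y)]
    rw [intervalIntegral.integral_sub
      (((sect_cont_y hcu x1).fun_mul (sect_cont_y hcp1τ x1)).fun_sub
        ((sect_cont_y hc1u x1).fun_mul (sect_cont_y hcτ x1)) |>.intervalIntegrable _ _)
      (((sect_cont_y hcu x0).fun_mul (sect_cont_y hcp1τ x0)).fun_sub
        ((sect_cont_y hc1u x0).fun_mul (sect_cont_y hcτ x0)) |>.intervalIntegrable _ _),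
      intervalIntegral.integral_sub
        (((sect_cont_y hcu x1).fun_mul (sect_cont_y hcp1τ x1)).intervalIntegrable _ _)
        (((sect_cont_y hc1u x1).fun_mul (sect_cont_y hcτ x1)).intervalIntegrable _ _),
      intervalIntegral.integral_sub
        (((sect_cont_y hcu x0).fun_mul (sect_cont_y hcp1τ x0)).intervalIntegrable _ _)
        (((sect_cont_y hc1u x0).fun_mul (sect_cont_y hcτ x0)).intervalIntegrable _ _)]
  -- Green identity in y direction
  have hGy : ipT x0 x1 y0 y1 u (pd2 (pd2 τ)) - ipT x0 x1 y0 y1 (pd2 (pd2 u)) τ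
      = ((∫ x in x0..x1, u x y1 * pd2 τ x y1) - (∫ x in x0..x1, pd2 u x y1 * τ x y1))
        - ((∫ x in x0..x1, u x y0 * pd2 τ x y0) - (∫ x in x0..x1, pd2 u x y0 * τ x y0)) := by
    have c1 : Continuous fun x => ∫ y in y0..y1, u x y * pd2 (pd2 τ) x y :=
      param_cont (F := fun a b => u a b * pd2 (pd2 τ) a b) (hcu.mul hcτ2) y0 y1
    have c2 : Continuous fun x => ∫ y in y0..y1, pd2 (pd2 u) x y * τ x y :=
      param_cont (F := fun a b => pd2 (pd2 u) a b * τ a b) (hc22.mul hcτ) y0 y1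
    have key : ∀ x, ((∫ y in y0..y1, u x y * pd2 (pd2 τ) x y)
        - ∫ y in y0..y1, pd2 (pd2 u) x y * τ x y)
        = (u x y1 * pd2 τ x y1 - pd2 u x y1 * τ x y1)
          - (u x y0 * pd2 τ x y0 - pd2 u x y0 * τ x y0) := by
      intro x
      rw [← intervalIntegral.integral_sub
        (((sect_cont_y hcu x).fun_mul (sect_cont_y hcτ2 x)).intervalIntegrable _ _)
        (((sect_cont_y hc22 x).fun_mul (sect_cont_y hcτ x)).intervalIntegrable _ _)]
      exact green_sec_y u τ x (hsecuy x) (hsecτy x) y0 y1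
    have e1 : ipT x0 x1 y0 y1 u (pd2 (pd2 τ))
        = ∫ x in x0..x1, ∫ y in y0..y1, u x y * pd2 (pd2 τ) x y := rfl
    have e2 : ipT x0 x1 y0 y1 (pd2 (pd2 u)) τ
        = ∫ x in x0..x1, ∫ y in y0..y1, pd2 (pd2 u) x y * τ x y := rfl
    rw [e1, e2,
      ← intervalIntegral.integral_sub (c1.intervalIntegrable _ _) (c2.intervalIntegrable _ _),
      intervalIntegral.integral_congr (g := fun x =>
        (u x y1 * pd2 τ x y1 - pd2 u x y1 * τ x y1)
          - (u x y0 * pd2 τ x y0 - pd2 u x y0 * τ x y0)) (fun x _ => key x)]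
    rw [intervalIntegral.integral_sub
      (((sect_cont_x hcu y1).fun_mul (sect_cont_x hcp2τ y1)).fun_sub
        ((sect_cont_x hc2u y1).fun_mul (sect_cont_x hcτ y1)) |>.intervalIntegrable _ _)
      (((sect_cont_x hcu y0).fun_mul (sect_cont_x hcp2τ y0)).fun_sub
        ((sect_cont_x hc2u y0).fun_mul (sect_cont_x hcτ y0)) |>.intervalIntegrable _ _),
      intervalIntegral.integral_sub
        (((sect_cont_x hcu y1).fun_mul (sect_cont_x hcp2τ y1)).intervalIntegrable _ _)
        (((sect_cont_x hc2u y1).fun_mul (sect_cont_x hcτ y1)).intervalIntegrable _ _),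
      intervalIntegral.integral_sub
        (((sect_cont_x hcu y0).fun_mul (sect_cont_x hcp2τ y0)).intervalIntegrable _ _)
        (((sect_cont_x hc2u y0).fun_mul (sect_cont_x hcτ y0)).intervalIntegrable _ _)]
  -- edge projections
  have hEqB : (∫ x in x0..x1, qbB x * pd2 τ x y0) = ∫ x in x0..x1, u x y0 * pd2 τ x y0 :=
    edge_proj hqbB (sect_cont_x hcu y0) (qrep_sect_x hp2τrep y0)
  have hEqT : (∫ x in x0..x1, qbT x * pd2 τ x y1) = ∫ x in x0..x1, u x y1 * pd2 τ x y1 :=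
    edge_proj hqbT (sect_cont_x hcu y1) (qrep_sect_x hp2τrep y1)
  have hEqL : (∫ y in y0..y1, qbL y * pd1 τ x0 y) = ∫ y in y0..y1, u x0 y * pd1 τ x0 y :=
    edge_proj hqbL (sect_cont_y hcu x0) (qrep_sect_y hp1τrep x0)
  have hEqR : (∫ y in y0..y1, qbR y * pd1 τ x1 y) = ∫ y in y0..y1, u x1 y * pd1 τ x1 y :=
    edge_proj hqbR (sect_cont_y hcu x1) (qrep_sect_y hp1τrep x1)
  have hEgB : (∫ x in x0..x1, g2B x * τ x y0) = ∫ x in x0..x1, pd2 u x y0 * τ x y0 :=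
    edge_proj hg2B (sect_cont_x hc2u y0) (qrep_sect_x hτrep y0)
  have hEgT : (∫ x in x0..x1, g2T x * τ x y1) = ∫ x in x0..x1, pd2 u x y1 * τ x y1 :=
    edge_proj hg2T (sect_cont_x hc2u y1) (qrep_sect_x hτrep y1)
  have hEgL : (∫ y in y0..y1, g1L y * τ x0 y) = ∫ y in y0..y1, pd1 u x0 y * τ x0 y :=
    edge_proj hg1L (sect_cont_y hc1u x0) (qrep_sect_y hτrep x0)
  have hEgR : (∫ y in y0..y1, g1R y * τ x1 y) = ∫ y in y0..y1, pd1 u x1 y * τ x1 y :=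
    edge_proj hg1R (sect_cont_y hc1u x1) (qrep_sect_y hτrep x1)
  -- normalize signs and conclude
  simp only [mul_neg, neg_mul, intervalIntegral.integral_neg]
  linarith [hA1, hA2, hA3, hB1, hB2, hGx, hGy, hEqB, hEqT, hEqL, hEqR, hEgB, hEgT, hEgL, hEgR]
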